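/- Fix ξ ∈ [1,2) and let μ be a Borel probability measure on ℝ with μ([0,1]) = 1 and 0 < μ([0,t]) < 1 for every t ∈ (0,1). Define the posterior cdf F_ι(w|z) := (∫_{[0,w]} f_ι(z,x) dμ(x)) / (∫_{[0,1]} f_ι(z,x) dμ(x)). Then there exists ι* ∈ (0, (2−ξ)/(1+ξ)) such that for every ι ∈ (0, ι*] and every w ∈ (0,1): F_ι(w|1) < F_ι(w|1+ξ). That is, with the continuous-support noise density f_ι, the posterior given the lower signal 1 strictly first-order stochastically dominates the posterior given the higher signal 1+ξ. -/

import Mathlib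

open MeasureTheory Set

/-- The normalizing constant `h = (2 + ι + ι² − ξ)/(2 + ξ + ι)`. -/
noncomputable def hconst (ι ξ : ℝ) : ℝ := (2 + ι + ι ^ 2 - ξ) / (2 + ξ + ι)

/-- The continuous-support signal density `f_ι(z,x)`: a trapezoid of width `ξ`,
a near-rectangle of width `1`, and a triangle of width `ι`. -/
noncomputable def fIota (ι ξ z x : ℝ) : ℝ :=
  if x ≤ z ∧ z < x + ξ then 1 - (z - x) * (1 - hconst ι ξ) / ξ
  else if x + ξ ≤ z ∧ z < x + ξ + 1 then hconst ι ξ - (z - x - ξ) * ι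
  else if x + ξ + 1 ≤ z ∧ z ≤ x + ξ + 1 + ι then
    hconst ι ξ - ι - (z - x - ξ - 1) * (hconst ι ξ - ι) / ι
  else 0

/-- The posterior cdf of `X` given the signal realization `Z = z`, for the
noise density `f_ι`. -/
noncomputable def postIota (μ : Measure ℝ) (ι ξ w z : ℝ) : ℝ :=
  (∫ x in Icc (0 : ℝ) w, fIota ι ξ z x ∂μ) / (∫ x in Icc (0 : ℝ) 1, fIota ι ξ z x ∂μ)

/-- Key abstract lemma: comparison of posteriors for two affine densities on `[0,1]`. -/
lemma affine_post_lt (μ : Measure ℝ) [IsProbabilityMeasure μ]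
    (hμ : μ (Icc (0 : ℝ) 1) = 1) (w : ℝ) (hw : w ∈ Ioo (0 : ℝ) 1)
    (hP0 : 0 < μ (Icc 0 w)) (hP1 : μ (Icc 0 w) < 1)
    (a₁ b₁ a₂ b₂ : ℝ) (ha₁ : 0 < a₁) (hb₁ : 0 ≤ b₁) (ha₂ : 0 < a₂) (hb₂ : 0 ≤ b₂)
    (hkey : a₁ * b₂ < a₂ * b₁) :
    (∫ x in Icc (0 : ℝ) w, (a₁ + b₁ * x) ∂μ) / (∫ x in Icc (0 : ℝ) 1, (a₁ + b₁ * x) ∂μ)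
      < (∫ x in Icc (0 : ℝ) w, (a₂ + b₂ * x) ∂μ) / (∫ x in Icc (0 : ℝ) 1, (a₂ + b₂ * x) ∂μ) := by
  obtain ⟨hw0, hw1⟩ := hw
  have hsub : Ioc w 1 ⊆ Icc (0 : ℝ) 1 := fun x hx => ⟨le_trans hw0.le hx.1.le, hx.2⟩
  have hsubw : Icc (0 : ℝ) w ⊆ Icc (0 : ℝ) 1 := Icc_subset_Icc_right hw1.le
  have hdisj : Disjoint (Icc (0 : ℝ) w) (Ioc w 1) := by
    rw [Set.disjoint_left]
    rintro x ⟨_, hxw⟩ ⟨hxw', _⟩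
    exact absurd hxw (not_le.2 hxw')
  have hunion : Icc (0 : ℝ) w ∪ Ioc w 1 = Icc (0 : ℝ) 1 :=
    Icc_union_Ioc_eq_Icc hw0.le hw1.le
  set P : ℝ := (μ (Icc (0 : ℝ) w)).toReal with hPdef
  set Q : ℝ := (μ (Ioc w 1)).toReal with hQdef
  have hmsum : μ (Icc (0 : ℝ) w) + μ (Ioc w 1) = 1 := by
    rw [← measure_union hdisj measurableSet_Ioc, hunion, hμ]
  have hfin1 : μ (Icc (0 : ℝ) w) ≠ ⊤ := measure_ne_top μ _
  have hfin2 : μ (Ioc w 1) ≠ ⊤ := measure_ne_top μ _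
  have hPQ : P + Q = 1 := by
    rw [hPdef, hQdef, ← ENNReal.toReal_add hfin1 hfin2, hmsum, ENNReal.toReal_one]
  have hPpos : 0 < P := ENNReal.toReal_pos hP0.ne' hfin1
  have hPlt : P < 1 := by
    rw [hPdef, show (1 : ℝ) = (1 : ENNReal).toReal from ENNReal.toReal_one.symm]
    exact ENNReal.toReal_strict_mono ENNReal.one_ne_top hP1
  have hQpos : 0 < Q := by linarith
  have hQ0 : μ (Ioc w 1) ≠ 0 := by
    intro h0
    rw [h0, add_zero] at hmsum
    exact absurd hmsum hP1.ne
  have hid1 : IntegrableOn (fun x : ℝ => x) (Icc (0 : ℝ) 1) μ := continuous_id.integrableOn_Icc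
  have hidw : IntegrableOn (fun x : ℝ => x) (Icc (0 : ℝ) w) μ := hid1.mono_set hsubw
  have hidI : IntegrableOn (fun x : ℝ => x) (Ioc w 1) μ := hid1.mono_set hsub
  set M : ℝ := ∫ x in Icc (0 : ℝ) w, x ∂μ with hMdef
  set N : ℝ := ∫ x in Ioc w 1, x ∂μ with hNdef
  set M₁ : ℝ := ∫ x in Icc (0 : ℝ) 1, x ∂μ with hM1def
  have hsplit : M₁ = M + N := by
    rw [hM1def, ← hunion, setIntegral_union hdisj measurableSet_Ioc hidw hidI]
  have hM_le : M ≤ w * P := by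
    have := setIntegral_mono_on hidw
      (integrableOn_const (measure_ne_top μ _)) measurableSet_Icc
      (fun x hx => hx.2 : ∀ x ∈ Icc (0 : ℝ) w, x ≤ w)
    rwa [setIntegral_const, smul_eq_mul, mul_comm] at this
  have hconstI : IntegrableOn (fun _ : ℝ => w) (Ioc w 1) μ :=
    integrableOn_const (measure_ne_top μ _)
  have hN_gt : w * Q < N := by
    have hpos : 0 < ∫ x in Ioc w 1, (x - w) ∂μ := by
      rw [setIntegral_pos_iff_support_of_nonneg_ae]
      · have hss : Ioc w 1 ⊆ Function.support (fun x : ℝ => x - w) := by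
          intro x hx
          simp only [Function.mem_support]
          intro h0
          have : x = w := by linarith [sub_eq_zero.mp h0]
          exact absurd hx.1 (by simp [this])
        rw [Set.inter_eq_self_of_subset_right hss]
        exact hQ0.bot_lt
      · filter_upwards [ae_restrict_mem measurableSet_Ioc] with x hx
        simp only [Pi.zero_apply]
        linarith [hx.1]
      · exact hidI.sub hconstI
    rw [integral_sub hidI hconstI, setIntegral_const, smul_eq_mul] at hpos
    rw [measureReal_def, ← hQdef] at hpos
    linarith [hpos]
  have hM1_nonneg : 0 ≤ M₁ :=
    setIntegral_nonneg measurableSet_Icc (fun x hx => hx.1)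
  have heval : ∀ a b : ℝ, ∀ s : Set ℝ, IntegrableOn (fun x : ℝ => x) s μ →
      ∫ x in s, (a + b * x) ∂μ = a * (μ s).toReal + b * ∫ x in s, x ∂μ := by
    intro a b s hs
    rw [integral_add (integrableOn_const (measure_ne_top μ s) : IntegrableOn (fun _ : ℝ => a) s μ) (hs.const_mul b),
      setIntegral_const, smul_eq_mul, measureReal_def, mul_comm ((μ s).toReal) a, integral_const_mul]
  rw [heval a₁ b₁ _ hidw, heval a₁ b₁ _ hid1, heval a₂ b₂ _ hidw, heval a₂ b₂ _ hid1,
    hμ, ENNReal.toReal_one, ← hPdef, ← hMdef, ← hM1def]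
  have hden₁ : 0 < a₁ * 1 + b₁ * M₁ := by nlinarith
  have hden₂ : 0 < a₂ * 1 + b₂ * M₁ := by nlinarith
  rw [div_lt_div_iff₀ hden₁ hden₂]
  have hMnn : 0 ≤ M := setIntegral_nonneg measurableSet_Icc (fun x hx => hx.1)
  have hPN : 0 < P * N - Q * M := by
    nlinarith [mul_pos hPpos (sub_pos.2 hN_gt), mul_nonneg hQpos.le (sub_nonneg.2 hM_le)]
  have hfinal := mul_pos (sub_pos.2 hkey) hPN
  rw [hsplit, ← hPQ]
  nlinarith [hfinal]

/-- Fix `ξ ∈ [1,2)` and a prior `μ` with support `[0,1]`. Then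
there exists `ι* ∈ (0, (2−ξ)/(1+ξ))` such that for every `ι ∈ (0, ι*]` and
every `w ∈ (0,1)`, `F_ι(w|1) < F_ι(w|1+ξ)`: the posterior given the lower
signal `1` strictly FOSDs the posterior given the higher signal `1+ξ`. -/
theorem stmt_7 (ξ : ℝ) (hξ : ξ ∈ Ico (1 : ℝ) 2)
    (μ : Measure ℝ) [IsProbabilityMeasure μ]
    (hμ : μ (Icc (0 : ℝ) 1) = 1)
    (hsupp : ∀ t ∈ Ioo (0 : ℝ) 1, 0 < μ (Icc 0 t) ∧ μ (Icc 0 t) < 1) :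
    ∃ ιs ∈ Ioo (0 : ℝ) ((2 - ξ) / (1 + ξ)),
      ∀ ι ∈ Ioc (0 : ℝ) ιs, ∀ w ∈ Ioo (0 : ℝ) 1,
        postIota μ ι ξ w 1 < postIota μ ι ξ w (1 + ξ) := by
  obtain ⟨hξ1, hξ2⟩ := hξ
  refine ⟨(2 - ξ) / 51, ⟨div_pos (by linarith) (by norm_num),
    div_lt_div_of_pos_left (by linarith) (by linarith) (by linarith)⟩, ?_⟩
  intro ι hι w hw
  obtain ⟨hι0, hι_le⟩ := hι
  have hι_small : 51 * ι ≤ 2 - ξ := by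
    have := hι_le
    rw [le_div_iff₀ (by norm_num : (0:ℝ) < 51)] at this
    linarith
  have hι1 : ι ≤ 1 / 51 := by linarith
  set h : ℝ := hconst ι ξ with hhdef
  have hden : (0:ℝ) < 2 + ξ + ι := by linarith
  have hhval : h = (2 + ι + ι ^ 2 - ξ) / (2 + ξ + ι) := rfl
  have hξpos : (0:ℝ) < ξ := by linarith
  have hhpos : 0 < h := by
    rw [hhval]
    exact div_pos (by nlinarith) hden
  have hh1 : h < 1 := by
    rw [hhval, div_lt_one hden]
    nlinarith
  have hιh : ι < h := by
    rw [hhval, lt_div_iff₀ hden]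
    nlinarith
  -- the core polynomial inequality: ι ξ < h (1 - h)
  have hcore : ι * ξ < h * (1 - h) := by
    have hsqle : (2 + ξ + ι) ^ 2 ≤ 25 := by nlinarith
    have hι2 : ι ^ 2 ≤ ι := by nlinarith [mul_nonneg hι0.le (by linarith : (0:ℝ) ≤ 1 - ι)]
    have hBnn : (0:ℝ) ≤ 2 * ξ - ι ^ 2 - 1 := by nlinarith
    have hL : ι * ξ * (2 + ξ + ι) ^ 2 ≤ 50 * ι := by
      nlinarith [mul_nonneg (mul_nonneg hι0.le (by linarith : (0:ℝ) ≤ 2 - ξ)) (sq_nonneg (2 + ξ + ι)),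
        mul_nonneg (mul_nonneg hι0.le hξpos.le) (by linarith : (0:ℝ) ≤ 25 - (2 + ξ + ι) ^ 2)]
    have hR : (2 - ξ) ≤ (2 + ι + ι ^ 2 - ξ) * (2 * ξ - ι ^ 2) := by
      nlinarith [mul_nonneg (by positivity : (0:ℝ) ≤ ι + ι ^ 2) (by linarith : (0:ℝ) ≤ 2 * ξ - ι ^ 2),
        mul_nonneg (by linarith : (0:ℝ) ≤ 2 - ξ) hBnn]
    have hpoly : ι * ξ * (2 + ξ + ι) ^ 2 < (2 + ι + ι ^ 2 - ξ) * (2 * ξ - ι ^ 2) := by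
      linarith
    have hrw : h * (1 - h) = ((2 + ι + ι ^ 2 - ξ) * (2 * ξ - ι ^ 2)) / (2 + ξ + ι) ^ 2 := by
      rw [hhval]
      field_simp
      ring
    rw [hrw, lt_div_iff₀ (by positivity)]
    linarith [hpoly]
  -- the affine coefficients
  have hb₁nn : 0 ≤ (1 - h) / ξ := div_nonneg (by linarith) hξpos.le
  have hb₁le : (1 - h) / ξ ≤ 1 - h := div_le_self (by linarith) hξ1
  have ha₁pos : 0 < 1 - (1 - h) / ξ := by linarith
  have ha₂pos : 0 < h - ι := by linarith
  have hkey : (1 - (1 - h) / ξ) * ι < (h - ι) * ((1 - h) / ξ) := by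
    have hc : (1 - h) / ξ * ξ = 1 - h := div_mul_cancel₀ _ hξpos.ne'
    have e1 : (1 - (1 - h) / ξ) * ι * ξ = (ξ - 1 + h) * ι := by
      linear_combination (-ι) * hc
    have e2 : (h - ι) * ((1 - h) / ξ) * ξ = (h - ι) * (1 - h) := by
      rw [mul_assoc, div_mul_cancel₀ _ hξpos.ne']
    have hlt : (1 - (1 - h) / ξ) * ι * ξ < (h - ι) * ((1 - h) / ξ) * ξ := by
      rw [e1, e2]; nlinarith [hcore]
    exact lt_of_mul_lt_mul_right hlt hξpos.le
  -- pointwise identification of the densities on [0,1]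
  have hf1 : ∀ x ∈ Icc (0:ℝ) 1, fIota ι ξ 1 x = (1 - (1 - h) / ξ) + ((1 - h) / ξ) * x := by
    rintro x ⟨hx0, hx1⟩
    rw [fIota, ← hhdef]
    by_cases hc : 1 < x + ξ
    · rw [if_pos ⟨hx1, hc⟩]; ring
    · have hxξ : x + ξ ≤ 1 := not_lt.1 hc
      have hx0' : x = 0 := le_antisymm (by linarith) hx0
      have hξ1' : ξ = 1 := le_antisymm (by linarith) hξ1
      rw [if_neg (fun hcc => hc hcc.2), if_pos ⟨by linarith, by linarith⟩, hx0', hξ1']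
      norm_num
  have hf2 : ∀ x ∈ Icc (0:ℝ) 1, fIota ι ξ (1 + ξ) x = (h - ι) + ι * x := by
    rintro x ⟨hx0, hx1⟩
    rw [fIota, ← hhdef]
    have hc1 : ¬(x ≤ 1 + ξ ∧ 1 + ξ < x + ξ) := by
      rintro ⟨_, hlt⟩; linarith
    rw [if_neg hc1]
    by_cases hx : 0 < x
    · rw [if_pos ⟨by linarith, by linarith⟩]; ring
    · have hx0' : x = 0 := le_antisymm (not_lt.1 hx) hx0
      rw [hx0']
      rw [if_neg (by rintro ⟨_, hlt⟩; linarith), if_pos ⟨by linarith, by linarith⟩]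
      have h0 : (1 + ξ - 0 - ξ - 1 : ℝ) = 0 := by ring
      rw [h0]
      simp
  -- identify the posterior integrals and conclude
  have hsubw : Icc (0 : ℝ) w ⊆ Icc (0 : ℝ) 1 := Icc_subset_Icc_right hw.2.le
  rw [postIota, postIota,
    setIntegral_congr_fun measurableSet_Icc (fun x hx => hf1 x (hsubw hx)),
    setIntegral_congr_fun measurableSet_Icc (fun x hx => hf1 x hx),
    setIntegral_congr_fun measurableSet_Icc (fun x hx => hf2 x (hsubw hx)),
    setIntegral_congr_fun measurableSet_Icc (fun x hx => hf2 x hx)]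
  exact affine_post_lt μ hμ w hw (hsupp w hw).1 (hsupp w hw).2
    _ _ _ _ ha₁pos hb₁nn ha₂pos hι0.le hkey
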